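/- If a finite positive symmetric-matrix-valued Radon measure D on ℝ^d satisfies ∫ ∇φ : dD = 0 for all compactly supported C¹ vector fields φ : ℝ^d → ℝ^d, then D = 0. -/

import Mathlib

open MeasureTheory Filter Topology

noncomputable def sInt {α : Type*} [MeasurableSpace α] (s : SignedMeasure α) (f : α → ℝ) : ℝ :=
  (∫ x, f x ∂s.toJordanDecomposition.posPart) - ∫ x, f x ∂s.toJordanDecomposition.negPart

lemma sInt_const_mul {α : Type*} [MeasurableSpace α] (s : SignedMeasure α) (r : ℝ) (f : α → ℝ) :
    sInt s (fun x => r * f x) = r * sInt s f := by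
  simp [sInt, integral_const_mul, mul_sub]

lemma sInt_add {α : Type*} [MeasurableSpace α] (s : SignedMeasure α) {f g : α → ℝ}
    (hf₁ : Integrable f s.toJordanDecomposition.posPart)
    (hf₂ : Integrable f s.toJordanDecomposition.negPart)
    (hg₁ : Integrable g s.toJordanDecomposition.posPart)
    (hg₂ : Integrable g s.toJordanDecomposition.negPart) :
    sInt s (fun x => f x + g x) = sInt s f + sInt s g := by
  simp [sInt, integral_add hf₁ hg₁, integral_add hf₂ hg₂]; ring

lemma signedMeasure_apply_eq {α : Type*} [MeasurableSpace α] (s : SignedMeasure α)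
    {A : Set α} (hA : MeasurableSet A) :
    s A = (s.toJordanDecomposition.posPart A).toReal
        - (s.toJordanDecomposition.negPart A).toReal := by
  conv_lhs => rw [← s.toSignedMeasure_toJordanDecomposition]
  rw [JordanDecomposition.toSignedMeasure, Measure.toSignedMeasure_sub_apply hA]
  rfl

/-- derivative of a scaled function -/
lemma fderiv_comp_const_smul {E : Type*} [NormedAddCommGroup E] [NormedSpace ℝ E]
    {f : E → ℝ} (hf : Differentiable ℝ f) (c : ℝ) (x : E) :
    fderiv ℝ (fun y => f (c • y)) x = c • fderiv ℝ f (c • x) := by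
  have h1 : HasFDerivAt (fun y : E => c • y) (c • ContinuousLinearMap.id ℝ E) x :=
    (hasFDerivAt_id x).const_smul c
  have h3 : HasFDerivAt (fun y => f (c • y))
      ((fderiv ℝ f (c • x)).comp (c • ContinuousLinearMap.id ℝ E)) x :=
    (hf (c • x)).hasFDerivAt.comp x h1
  rw [h3.fderiv]
  ext v
  simp [(fderiv ℝ f (c • x)).map_smul]

/-- convergence of integrals of the cutoffs against a finite measure -/
lemma tendsto_integral_cutoff {E : Type*} [NormedAddCommGroup E] [NormedSpace ℝ E]
    [MeasurableSpace E] [OpensMeasurableSpace E] [HasContDiffBump E]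
    (bf : ContDiffBump (0 : E)) (μ : Measure E) [IsFiniteMeasure μ]
    (hrIn : bf.rIn = 1) :
    Tendsto (fun n : ℕ => ∫ x, bf ((((n : ℝ) + 1))⁻¹ • x) ∂μ) atTop
      (𝓝 ((μ Set.univ).toReal)) := by
  have h := tendsto_integral_of_dominated_convergence (μ := μ)
      (F := fun n : ℕ => fun x => bf ((((n : ℝ) + 1))⁻¹ • x)) (f := fun _ => (1 : ℝ))
      (bound := fun _ => (1 : ℝ))
      (fun n => (bf.continuous.comp (continuous_const_smul _)).aestronglyMeasurable)
      (integrable_const 1)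
      (fun n => Filter.Eventually.of_forall fun x => by
        rw [Real.norm_eq_abs, abs_of_nonneg bf.nonneg]; exact bf.le_one)
      (Filter.Eventually.of_forall fun x => ?_)
  · show Tendsto _ _ (𝓝 (μ.real Set.univ))
    simpa using h
  · have : ∀ᶠ n : ℕ in atTop, bf ((((n : ℝ) + 1))⁻¹ • x) = 1 := by
      filter_upwards [eventually_ge_atTop ⌈‖x‖⌉₊] with n hn
      apply bf.one_of_mem_closedBall
      rw [Metric.mem_closedBall, dist_zero_right, norm_smul, hrIn]
      have h1 : ‖x‖ ≤ (n : ℝ) + 1 := by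
        calc ‖x‖ ≤ (⌈‖x‖⌉₊ : ℝ) := Nat.le_ceil _
        _ ≤ (n : ℝ) := by exact_mod_cast hn
        _ ≤ (n : ℝ) + 1 := by linarith
      have h2 : (0:ℝ) < (n : ℝ) + 1 := by positivity
      rw [norm_inv, Real.norm_eq_abs, abs_of_pos h2, inv_mul_le_iff₀ h2, mul_one]
      exact h1
    exact Tendsto.congr' (this.mono fun n hn => hn.symm) tendsto_const_nhds

lemma tendsto_integral_err {E : Type*} [NormedAddCommGroup E] [NormedSpace ℝ E]
    [MeasurableSpace E] [OpensMeasurableSpace E] [HasContDiffBump E] [FiniteDimensional ℝ E]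
    (bf : ContDiffBump (0 : E)) (hrIn : bf.rIn = 1)
    (μ : Measure E) [IsFiniteMeasure μ] (v : E) (B : E →L[ℝ] ℝ) :
    Tendsto (fun n : ℕ => ∫ x,
        ((((n:ℝ)+1))⁻¹ * fderiv ℝ (⇑bf) ((((n:ℝ)+1))⁻¹ • x) v) * B x ∂μ)
      atTop (𝓝 0) := by
  have hcd := bf.contDiff (n := (⊤ : ℕ∞))
  have hDcont : Continuous (fderiv ℝ ⇑bf) := hcd.continuous_fderiv (by simp)
  have hDcs : HasCompactSupport (fderiv ℝ ⇑bf) := bf.hasCompactSupport.fderiv ℝ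
  obtain ⟨C, hC⟩ := hDcs.exists_bound_of_continuous hDcont
  have hC0 : 0 ≤ C := le_trans (norm_nonneg _) (hC 0)
  have hcn : ∀ n : ℕ, (0:ℝ) < ((n:ℝ)+1)⁻¹ := fun n => by positivity
  have key := tendsto_integral_of_dominated_convergence (μ := μ)
      (F := fun n : ℕ => fun x =>
        ((((n:ℝ)+1))⁻¹ * fderiv ℝ (⇑bf) ((((n:ℝ)+1))⁻¹ • x) v) * B x)
      (f := fun _ => (0 : ℝ)) (bound := fun _ => C * ‖v‖ * ‖B‖ * bf.rOut)
      (fun n => (((continuous_const.mul ((hDcont.comp (continuous_const_smul _)).clm_apply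
          continuous_const)).mul B.continuous)).aestronglyMeasurable)
      (integrable_const _)
      (fun n => Filter.Eventually.of_forall fun x => ?_)
      (Filter.Eventually.of_forall fun x => ?_)
  · simpa using key
  · -- the uniform bound
    set c := (((n:ℝ)+1))⁻¹ with hc
    by_cases hx : fderiv ℝ (⇑bf) (c • x) = 0
    · simp only [hx]
      simp only [ContinuousLinearMap.zero_apply, mul_zero, zero_mul, norm_zero]
      exact mul_nonneg (by positivity) bf.rOut_pos.le
    · have hmem : c • x ∈ tsupport ⇑bf := by
        exact support_fderiv_subset ℝ (Function.mem_support.2 hx)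
      rw [bf.tsupport_eq] at hmem
      have hnorm : ‖c • x‖ ≤ bf.rOut := by
        simpa [dist_zero_right] using Metric.mem_closedBall.1 hmem
      have hcx : c * ‖x‖ ≤ bf.rOut := by
        rwa [norm_smul, Real.norm_eq_abs, abs_of_pos (hcn n)] at hnorm
      have h1 : ‖(c * fderiv ℝ (⇑bf) (c • x) v) * B x‖
          ≤ (c * (‖fderiv ℝ (⇑bf) (c • x)‖ * ‖v‖)) * (‖B‖ * ‖x‖) := by
        rw [norm_mul, norm_mul]
        gcongr
        · rw [Real.norm_eq_abs, abs_of_pos (hcn n)]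
        · exact (fderiv ℝ (⇑bf) (c • x)).le_opNorm v
        · exact B.le_opNorm x
      calc ‖(c * fderiv ℝ (⇑bf) (c • x) v) * B x‖
          ≤ (c * (‖fderiv ℝ (⇑bf) (c • x)‖ * ‖v‖)) * (‖B‖ * ‖x‖) := h1
        _ = (‖fderiv ℝ (⇑bf) (c • x)‖ * ‖v‖ * ‖B‖) * (c * ‖x‖) := by ring
        _ ≤ (C * ‖v‖ * ‖B‖) * bf.rOut :=
            mul_le_mul (by gcongr; exact hC _) hcx
              (mul_nonneg (hcn n).le (norm_nonneg x)) (by positivity)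
        _ = C * ‖v‖ * ‖B‖ * bf.rOut := by ring
  · -- pointwise convergence to 0
    have hev : ∀ᶠ n : ℕ in atTop,
        ((((n:ℝ)+1))⁻¹ * fderiv ℝ (⇑bf) ((((n:ℝ)+1))⁻¹ • x) v) * B x = 0 := by
      filter_upwards [eventually_ge_atTop ⌈‖x‖⌉₊] with n hn
      set c := (((n:ℝ)+1))⁻¹ with hc
      have hlt : ‖c • x‖ < 1 := by
        rw [norm_smul, Real.norm_eq_abs, abs_of_pos (hcn n)]
        have h1 : ‖x‖ ≤ (n : ℝ) := le_trans (Nat.le_ceil _) (by exact_mod_cast hn)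
        have h2 : (0:ℝ) < (n : ℝ) + 1 := by positivity
        rw [inv_mul_lt_iff₀ h2]
        linarith
      have hmem : c • x ∈ Metric.ball (0 : E) bf.rIn := by
        rw [Metric.mem_ball, dist_zero_right, hrIn]; exact hlt
      have heq : ⇑bf =ᶠ[𝓝 (c • x)] fun _ => (1 : ℝ) := by
        filter_upwards [Metric.isOpen_ball.mem_nhds hmem] with y hy
        exact bf.one_of_mem_closedBall (Metric.ball_subset_closedBall hy)
      have : fderiv ℝ (⇑bf) (c • x) = 0 := by
        rw [heq.fderiv_eq]; exact fderiv_const_apply 1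
      simp [this]
    exact Tendsto.congr' (hev.mono fun n hn => hn.symm) tendsto_const_nhds

lemma keyA (d : ℕ)
    (D : Fin d → Fin d → SignedMeasure (EuclideanSpace ℝ (Fin d)))
    (hdiv : ∀ φ : EuclideanSpace ℝ (Fin d) → Fin d → ℝ,
      ContDiff ℝ 1 φ → HasCompactSupport φ →
      ∑ i, ∑ j, sInt (D i j)
        (fun x => fderiv ℝ (fun y => φ y i) x (EuclideanSpace.single j 1)) = 0)
    (ξ : Fin d → ℝ) :
    ∑ i, ∑ j, ξ i * ξ j * (D i j) Set.univ = 0 := by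
  classical
  set E := EuclideanSpace ℝ (Fin d) with hE
  let w : E := (WithLp.equiv 2 (Fin d → ℝ)).symm ξ
  let B : E →L[ℝ] ℝ := innerSL ℝ w
  have hBsingle : ∀ j, B (EuclideanSpace.single j 1) = ξ j := by
    intro j
    show inner ℝ ((WithLp.equiv 2 (Fin d → ℝ)).symm ξ) (EuclideanSpace.single j 1) = ξ j
    rw [EuclideanSpace.inner_single_right]
    simp
  let bf : ContDiffBump (0 : E) := ⟨1, 2, one_pos, one_lt_two⟩
  have hrIn : bf.rIn = 1 := rfl
  let c : ℕ → ℝ := fun n => ((n:ℝ)+1)⁻¹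
  have hc0 : ∀ n, c n ≠ 0 := fun n => by positivity
  have hbfdiff : Differentiable ℝ ⇑bf :=
    (bf.contDiff (n := (1 : ℕ∞))).differentiable (by simp)
  let η : ℕ → E → ℝ := fun n x => bf (c n • x)
  have hηcd : ∀ n, ContDiff ℝ 1 (η n) := fun n =>
    (bf.contDiff).comp (contDiff_id.const_smul (c n))
  have hηdiff : ∀ n, Differentiable ℝ (η n) := fun n => (hηcd n).differentiable one_ne_zero
  have hηfd : ∀ n x, fderiv ℝ (η n) x = c n • fderiv ℝ (⇑bf) (c n • x) := fun n x =>
    fderiv_comp_const_smul hbfdiff (c n) x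
  let G : ℕ → Fin d → E → ℝ := fun n j x =>
    (c n * fderiv ℝ (⇑bf) (c n • x) (EuclideanSpace.single j 1)) * B x
  -- continuity facts
  have hDcont : Continuous (fderiv ℝ ⇑bf) :=
    (bf.contDiff (n := (⊤ : ℕ∞))).continuous_fderiv (by simp)
  have hGcont : ∀ n j, Continuous (G n j) := fun n j =>
    (continuous_const.mul ((hDcont.comp (continuous_const_smul _)).clm_apply
      continuous_const)).mul B.continuous
  have hGcs : ∀ n j, HasCompactSupport (G n j) := by
    intro n j
    apply ((bf.hasCompactSupport.fderiv ℝ).comp_smul (hc0 n)).mono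
    intro y hy
    simp only [Function.mem_support] at hy ⊢
    intro h0
    apply hy
    simp only [G]
    rw [show fderiv ℝ (⇑bf) (c n • y) = 0 from h0]
    simp
  have hηcont : ∀ n, Continuous (η n) := fun n => (hηcd n).continuous
  have hηcs : ∀ n, HasCompactSupport (η n) := fun n =>
    bf.hasCompactSupport.comp_smul (hc0 n)
  -- test functions
  let φ : ℕ → E → Fin d → ℝ := fun n y i => ξ i * (η n y * B y)
  have hφcd : ∀ n, ContDiff ℝ 1 (φ n) := fun n =>
    contDiff_pi.2 fun i => contDiff_const.mul ((hηcd n).mul B.contDiff)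
  have hφcs : ∀ n, HasCompactSupport (φ n) := by
    intro n
    apply (hηcs n).mono
    intro y hy
    simp only [Function.mem_support] at hy ⊢
    intro h0
    exact hy (funext fun i => by simp [φ, h0])
  have hder : ∀ n (i j : Fin d) x,
      fderiv ℝ (fun y => φ n y i) x (EuclideanSpace.single j 1)
        = ξ i * (G n j x + η n x * ξ j) := by
    intro n i j x
    show fderiv ℝ (fun y => ξ i * (η n y * B y)) x (EuclideanSpace.single j 1) = _
    rw [fderiv_const_mul (a := fun y => η n y * B y) ((hηdiff n x).mul B.differentiableAt) (ξ i)]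
    rw [ContinuousLinearMap.smul_apply]
    rw [fderiv_fun_mul (hηdiff n x) B.differentiableAt]
    rw [ContinuousLinearMap.add_apply, ContinuousLinearMap.smul_apply,
      ContinuousLinearMap.smul_apply, B.fderiv, hηfd n x,
      ContinuousLinearMap.smul_apply, hBsingle j]
    simp only [smul_eq_mul, G]
    ring
  have hn0 : ∀ n, ∑ i, ∑ j,
      (ξ i * sInt (D i j) (G n j) + ξ i * ξ j * sInt (D i j) (η n)) = 0 := by
    intro n
    have h0 := hdiv (φ n) (hφcd n) (hφcs n)
    rw [← h0]
    refine Finset.sum_congr rfl fun i _ => Finset.sum_congr rfl fun j _ => ?_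
    have heq : (fun x => fderiv ℝ (fun y => φ n y i) x (EuclideanSpace.single j 1))
        = fun x => ξ i * (G n j x + η n x * ξ j) := funext (hder n i j)
    rw [heq, sInt_const_mul]
    have hi1 : Integrable (G n j) (D i j).toJordanDecomposition.posPart :=
      (hGcont n j).integrable_of_hasCompactSupport (hGcs n j)
    have hi2 : Integrable (G n j) (D i j).toJordanDecomposition.negPart :=
      (hGcont n j).integrable_of_hasCompactSupport (hGcs n j)
    have hi3 : Integrable (fun x => η n x * ξ j) (D i j).toJordanDecomposition.posPart :=
      ((hηcont n).mul continuous_const).integrable_of_hasCompactSupport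
        ((hηcs n).mul_right)
    have hi4 : Integrable (fun x => η n x * ξ j) (D i j).toJordanDecomposition.negPart :=
      ((hηcont n).mul continuous_const).integrable_of_hasCompactSupport
        ((hηcs n).mul_right)
    rw [sInt_add (D i j) hi1 hi2 hi3 hi4]
    have : sInt (D i j) (fun x => η n x * ξ j) = ξ j * sInt (D i j) (η n) := by
      rw [show (fun x => η n x * ξ j) = fun x => ξ j * η n x from funext fun x => mul_comm _ _]
      exact sInt_const_mul (D i j) (ξ j) (η n)
    rw [this]
    ring
  -- limits
  have hηlim : ∀ i j, Tendsto (fun n => sInt (D i j) (η n)) atTop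
      (𝓝 ((D i j) Set.univ)) := by
    intro i j
    rw [signedMeasure_apply_eq (D i j) MeasurableSet.univ]
    exact (tendsto_integral_cutoff bf _ hrIn).sub (tendsto_integral_cutoff bf _ hrIn)
  have hGlim : ∀ i j, Tendsto (fun n => sInt (D i j) (G n j)) atTop (𝓝 0) := by
    intro i j
    have h1 := tendsto_integral_err bf hrIn ((D i j).toJordanDecomposition.posPart)
      (EuclideanSpace.single j 1) B
    have h2 := tendsto_integral_err bf hrIn ((D i j).toJordanDecomposition.negPart)
      (EuclideanSpace.single j 1) B
    simpa [sInt] using h1.sub h2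
  have hF : Tendsto (fun n => ∑ i, ∑ j,
      (ξ i * sInt (D i j) (G n j) + ξ i * ξ j * sInt (D i j) (η n))) atTop
      (𝓝 (∑ i, ∑ j, (ξ i * 0 + ξ i * ξ j * (D i j) Set.univ))) :=
    tendsto_finset_sum _ fun i _ => tendsto_finset_sum _ fun j _ =>
      (((hGlim i j).const_mul (ξ i)).add ((hηlim i j).const_mul (ξ i * ξ j)))
  have h00 : Tendsto (fun n => ∑ i, ∑ j,
      (ξ i * sInt (D i j) (G n j) + ξ i * ξ j * sInt (D i j) (η n))) atTop (𝓝 0) := by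
    simp only [hn0]
    exact tendsto_const_nhds
  have hfin := tendsto_nhds_unique hF h00
  simpa using hfin

theorem matrixMeasure_eq_zero_of_gradient_orthogonal (d : ℕ) (hd : 1 ≤ d)
    (D : Fin d → Fin d → SignedMeasure (EuclideanSpace ℝ (Fin d)))
    (hsymm : ∀ i j, D i j = D j i)
    (hpsd : ∀ (ξ : Fin d → ℝ) (A : Set (EuclideanSpace ℝ (Fin d))), MeasurableSet A →
      0 ≤ ∑ i, ∑ j, ξ i * ξ j * (D i j) A)
    (hdiv : ∀ φ : EuclideanSpace ℝ (Fin d) → Fin d → ℝ,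
      ContDiff ℝ 1 φ → HasCompactSupport φ →
      ∑ i, ∑ j, sInt (D i j)
        (fun x => fderiv ℝ (fun y => φ y i) x (EuclideanSpace.single j 1)) = 0) :
    ∀ i j, D i j = 0 := by
  classical
  have hQ : ∀ (ξ : Fin d → ℝ) (A : Set (EuclideanSpace ℝ (Fin d))), MeasurableSet A →
      ∑ i, ∑ j, ξ i * ξ j * (D i j) A = 0 := by
    intro ξ A hA
    have huniv := keyA d D hdiv ξ
    have h1 := hpsd ξ A hA
    have h2 := hpsd ξ Aᶜ hA.compl
    have hsum : (∑ i, ∑ j, ξ i * ξ j * (D i j) A) + (∑ i, ∑ j, ξ i * ξ j * (D i j) Aᶜ)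
        = ∑ i, ∑ j, ξ i * ξ j * (D i j) Set.univ := by
      rw [← Finset.sum_add_distrib]
      refine Finset.sum_congr rfl fun i _ => ?_
      rw [← Finset.sum_add_distrib]
      refine Finset.sum_congr rfl fun j _ => ?_
      rw [← mul_add]
      congr 1
      rw [← VectorMeasure.of_union disjoint_compl_right hA hA.compl,
        Set.union_compl_self]
    linarith
  have hdiag : ∀ i (A : Set (EuclideanSpace ℝ (Fin d))), MeasurableSet A →
      (D i i) A = 0 := by
    intro i A hA
    have h := hQ (Pi.single i 1) A hA
    simpa [Pi.single_apply, ite_mul, mul_ite, Finset.sum_ite_eq',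
      Finset.mem_univ] using h
  intro i j
  apply VectorMeasure.ext
  intro A hA
  rw [VectorMeasure.zero_apply]
  by_cases hij : i = j
  · subst hij; exact hdiag i A hA
  · have h := hQ (fun k => (if k = i then (1:ℝ) else 0) + (if k = j then 1 else 0)) A hA
    have hexp : ∑ i', ∑ j',
        ((if i' = i then (1:ℝ) else 0) + (if i' = j then 1 else 0))
          * ((if j' = i then (1:ℝ) else 0) + (if j' = j then 1 else 0)) * (D i' j') A
        = (D i i) A + (D j i) A + ((D i j) A + (D j j) A) := by
      simp [add_mul, mul_add, ite_mul, mul_ite, Finset.sum_add_distrib,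
        Finset.sum_ite_eq', Finset.mem_univ]
    rw [hexp] at h
    have hji : (D j i) A = (D i j) A := by rw [hsymm j i]
    have h1 := hdiag i A hA
    have h2 := hdiag j A hA
    linarith
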